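/- Let n be an odd prime and c ∈ ZMod n nonzero. For the d-dimensional Heisenberg group representation, the operator ρ_c(e_i) = I^{⊗(i−1)} ⊗ S ⊗ I^{⊗(d−i)} and ρ_c(f_i) = I^{⊗(i−1)} ⊗ R^c ⊗ I^{⊗(d−i)} on (ℂ^n)^{⊗d} satisfy: the operator norm of (1/(4d)) ∑_{i=1}^d (ρ_c(e_i) + ρ_c(e_i)* + ρ_c(f_i) + ρ_c(f_i)*) equals the operator norm of (1/4)(S + S* + R^c + R^{−c}). -/

import Mathlib

open Matrix

/-- `ω n = e^{2πi/n}`. -/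
noncomputable def omg (n : ℕ) : ℂ := Complex.exp (2 * Real.pi * Complex.I / n)

/-- The cyclic shift matrix: `S_{i,j} = 1` iff `i + 1 = j` in `ZMod n`. -/
noncomputable def Smat (n : ℕ) : Matrix (ZMod n) (ZMod n) ℂ :=
  Matrix.of fun i j => if i + 1 = j then 1 else 0

/-- The diagonal matrix `R` with `R_{j,j} = ω^j`. -/
noncomputable def Rmat (n : ℕ) : Matrix (ZMod n) (ZMod n) ℂ :=
  Matrix.diagonal fun j => omg n ^ (j.val)

/-- The operator `I ⊗ ⋯ ⊗ M ⊗ ⋯ ⊗ I` (with `M` in slot `i`), as a matrix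
indexed by `Fin d → ZMod n` (a model of `(ℂ^n)^{⊗ d}`). -/
noncomputable def slot (n d : ℕ) (M : Matrix (ZMod n) (ZMod n) ℂ) (i : Fin d) :
    Matrix (Fin d → ZMod n) (Fin d → ZMod n) ℂ :=
  Matrix.of fun x y => ∏ j, if j = i then M (x j) (y j) else if x j = y j then 1 else 0

/-- The ℓ²-operator norm of a matrix. -/
noncomputable def opNormM {ι : Type*} [Fintype ι] [DecidableEq ι]
    (M : Matrix ι ι ℂ) : ℝ :=
  ‖Matrix.toEuclideanCLM (𝕜 := ℂ) M‖

open scoped Matrix.Norms.L2Operator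

section Aux

variable {n d : ℕ} [NeZero n]

lemma opNormM_eq {ι : Type*} [Fintype ι] [DecidableEq ι] (M : Matrix ι ι ℂ) :
    opNormM M = ‖M‖ := rfl

lemma slot_apply (M : Matrix (ZMod n) (ZMod n) ℂ) (i : Fin d) (x y : Fin d → ZMod n) :
    slot n d M i x y
      = M (x i) (y i) * ∏ j ∈ Finset.univ.erase i, (if x j = y j then (1:ℂ) else 0) := by
  simp only [slot, Matrix.of_apply]
  rw [← Finset.mul_prod_erase Finset.univ _ (Finset.mem_univ i), if_pos rfl]
  exact congrArg _ (Finset.prod_congr rfl fun j hj => if_neg (Finset.ne_of_mem_erase hj))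

lemma slot_add (A B : Matrix (ZMod n) (ZMod n) ℂ) (i : Fin d) :
    slot n d (A + B) i = slot n d A i + slot n d B i := by
  ext x y
  simp only [slot_apply, Matrix.add_apply, add_mul]

lemma slot_conjTranspose (M : Matrix (ZMod n) (ZMod n) ℂ) (i : Fin d) :
    (slot n d M i)ᴴ = slot n d Mᴴ i := by
  ext x y
  rw [conjTranspose_apply, slot_apply, slot_apply, star_mul', star_prod]
  congr 1
  refine Finset.prod_congr rfl fun j hj => ?_
  rw [apply_ite (star : ℂ → ℂ), star_one, star_zero]
  exact if_congr eq_comm rfl rfl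

lemma slot_mulVec (M : Matrix (ZMod n) (ZMod n) ℂ) (i : Fin d)
    (w : (Fin d → ZMod n) → ℂ) (x : Fin d → ZMod n) :
    (slot n d M i *ᵥ w) x = ∑ b, M (x i) b * w (Function.update x i b) := by
  classical
  have hinj : Function.Injective (Function.update x i) := fun b b' h => by
    simpa using congrFun h i
  show ∑ y, slot n d M i x y * w y = _
  symm
  calc ∑ b, M (x i) b * w (Function.update x i b)
      = ∑ y ∈ Finset.univ.image (Function.update x i),
          slot n d M i x y * w y := by
        rw [Finset.sum_image (fun a _ b _ h => hinj h)]
        refine Finset.sum_congr rfl fun b _ => ?_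
        rw [slot_apply, Function.update_self]
        have h1 : (∏ j ∈ Finset.univ.erase i,
            (if x j = Function.update x i b j then (1:ℂ) else 0)) = 1 :=
          Finset.prod_eq_one fun j hj => by
            rw [Function.update_of_ne (Finset.ne_of_mem_erase hj), if_pos rfl]
        rw [h1, mul_one]
    _ = ∑ y, slot n d M i x y * w y := by
        refine Finset.sum_subset (Finset.subset_univ _) fun y _ hy => ?_
        rw [slot_apply]
        have hex : ∃ j ∈ Finset.univ.erase i, x j ≠ y j := by
          by_contra h
          push_neg at h
          refine hy (Finset.mem_image.mpr ⟨y i, Finset.mem_univ _, funext fun j => ?_⟩)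
          by_cases hj : j = i
          · subst hj; rw [Function.update_self]
          · rw [Function.update_of_ne hj]
            exact h j (Finset.mem_erase.mpr ⟨hj, Finset.mem_univ _⟩)
        obtain ⟨j, hj, hne⟩ := hex
        have hz : (∏ j ∈ Finset.univ.erase i, if x j = y j then (1:ℂ) else 0) = 0 :=
          Finset.prod_eq_zero hj (if_neg hne)
        rw [hz, mul_zero, zero_mul]

lemma sum_mulVec {ι κ : Type*} [Fintype ι] [Fintype κ] (s : Finset κ)
    (A : κ → Matrix ι ι ℂ) (v : ι → ℂ) :
    (∑ k ∈ s, A k) *ᵥ v = ∑ k ∈ s, A k *ᵥ v := by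
  funext x
  show ∑ y, (∑ k ∈ s, A k) x y * v y = _
  rw [Finset.sum_apply]
  simp only [Matrix.sum_apply, Finset.sum_mul, Finset.sum_apply]
  rw [Finset.sum_comm]
  rfl

lemma slot_mulVec_prodvec (M : Matrix (ZMod n) (ZMod n) ℂ) (i : Fin d)
    (v : ZMod n → ℂ) (lam : ℂ) (hv : M *ᵥ v = lam • v) :
    slot n d M i *ᵥ (fun x => ∏ j, v (x j)) = lam • fun x => ∏ j, v (x j) := by
  funext x
  rw [Pi.smul_apply, slot_mulVec, smul_eq_mul]
  have hupd : ∀ b : ZMod n, (∏ j, v (Function.update x i b j))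
      = v b * ∏ j ∈ Finset.univ.erase i, v (x j) := fun b => by
    rw [← Finset.mul_prod_erase Finset.univ _ (Finset.mem_univ i), Function.update_self]
    congr 1
    exact Finset.prod_congr rfl fun j hj => by
      rw [Function.update_of_ne (Finset.ne_of_mem_erase hj)]
  calc ∑ b, M (x i) b * ∏ j, v (Function.update x i b j)
      = (∑ b, M (x i) b * v b) * ∏ j ∈ Finset.univ.erase i, v (x j) := by
        rw [Finset.sum_mul]
        exact Finset.sum_congr rfl fun b _ => by rw [hupd b, mul_assoc]
    _ = (lam • v) (x i) * ∏ j ∈ Finset.univ.erase i, v (x j) := by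
        rw [← hv]; rfl
    _ = lam * ∏ j, v (x j) := by
        rw [Pi.smul_apply, smul_eq_mul, mul_assoc,
          Finset.mul_prod_erase Finset.univ (fun j => v (x j)) (Finset.mem_univ i)]

lemma norm_diagonal_le {ι : Type*} [Fintype ι] [DecidableEq ι]
    (v : ι → ℂ) (C : ℝ) (hC : 0 ≤ C) (h : ∀ i, ‖v i‖ ≤ C) :
    ‖Matrix.diagonal v‖ ≤ C := by
  rw [Matrix.l2_opNorm_def]
  refine ContinuousLinearMap.opNorm_le_bound _ hC fun w => ?_
  show ‖(EuclideanSpace.equiv ι ℂ).symm (Matrix.diagonal v *ᵥ w)‖ ≤ C * ‖w‖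
  rw [EuclideanSpace.norm_eq, EuclideanSpace.norm_eq]
  have key : ∀ x : ι, ‖((EuclideanSpace.equiv ι ℂ).symm (Matrix.diagonal v *ᵥ w)) x‖ ^ 2
      ≤ C ^ 2 * ‖w x‖ ^ 2 := fun x => by
    have : ((EuclideanSpace.equiv ι ℂ).symm (Matrix.diagonal v *ᵥ w)) x = v x * w x :=
      Matrix.mulVec_diagonal v w x
    rw [this, norm_mul, mul_pow]
    exact mul_le_mul_of_nonneg_right
      (pow_le_pow_left₀ (norm_nonneg _) (h x) 2) (by positivity)
  calc Real.sqrt (∑ x, ‖((EuclideanSpace.equiv ι ℂ).symm (Matrix.diagonal v *ᵥ w)) x‖ ^ 2)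
      ≤ Real.sqrt (∑ x, C ^ 2 * ‖w x‖ ^ 2) :=
        Real.sqrt_le_sqrt (Finset.sum_le_sum fun x _ => key x)
    _ = C * Real.sqrt (∑ x, ‖w x‖ ^ 2) := by
        rw [← Finset.mul_sum, Real.sqrt_mul (sq_nonneg C), Real.sqrt_sq hC]

lemma exists_eig {ι : Type*} [Fintype ι] [DecidableEq ι] [Nonempty ι]
    {A : Matrix ι ι ℂ} (hA : A.IsHermitian) :
    ∃ (lam : ℝ) (v : ι → ℂ), v ≠ 0 ∧ A *ᵥ v = (lam : ℂ) • v ∧ ‖A‖ ≤ |lam| := by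
  obtain ⟨i₀, -, hmax⟩ := Finset.exists_max_image Finset.univ
    (fun i => |hA.eigenvalues i|) ⟨Classical.arbitrary ι, Finset.mem_univ _⟩
  refine ⟨hA.eigenvalues i₀, ⇑(hA.eigenvectorBasis i₀), ?_, ?_, ?_⟩
  · intro h
    have h0 : hA.eigenvectorBasis i₀ = 0 := by
      ext j; exact congrFun h j
    have h1 := hA.eigenvectorBasis.orthonormal.1 i₀
    rw [h0] at h1
    simp at h1
  · funext b
    have := congrFun (hA.mulVec_eigenvectorBasis i₀) b
    simpa [Complex.real_smul] using this
  · conv_lhs => rw [hA.spectral_theorem]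
    rw [Unitary.conjStarAlgAut_apply]
    rw [CStarRing.norm_mul_mem_unitary _ (Unitary.star_mem (hA.eigenvectorUnitary).2),
      CStarRing.norm_mem_unitary_mul _ (hA.eigenvectorUnitary).2]
    exact norm_diagonal_le _ _ (abs_nonneg _) fun i => by
      rw [Function.comp_apply, RCLike.norm_ofReal]
      exact hmax i (Finset.mem_univ i)

lemma norm_slot_le (M : Matrix (ZMod n) (ZMod n) ℂ) (i : Fin d) :
    ‖slot n d M i‖ ≤ ‖M‖ := by
  classical
  rw [Matrix.l2_opNorm_def]
  refine ContinuousLinearMap.opNorm_le_bound _ (norm_nonneg M) fun w => ?_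
  show ‖(EuclideanSpace.equiv (Fin d → ZMod n) ℂ).symm (slot n d M i *ᵥ w)‖ ≤ ‖M‖ * ‖w‖
  set e := Equiv.piSplitAt i (fun _ : Fin d => ZMod n) with he
  have hsame : ∀ (b : ZMod n) (r : {j : Fin d // j ≠ i} → ZMod n), (e.symm (b, r)) i = b := by
    intro b r
    simp [he, Equiv.piSplitAt, eq_rec_constant]
  have hne : ∀ (b : ZMod n) (r : {j : Fin d // j ≠ i} → ZMod n) (j : Fin d) (h : j ≠ i),
      (e.symm (b, r)) j = r ⟨j, h⟩ := by
    intro b r j h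
    simp [he, Equiv.piSplitAt, h]
  have hupd : ∀ (b c : ZMod n) (r : {j : Fin d // j ≠ i} → ZMod n),
      Function.update (e.symm (b, r)) i c = e.symm (c, r) := by
    intro b c r
    funext j
    by_cases h : j = i
    · subst h; rw [Function.update_self, hsame]
    · rw [Function.update_of_ne h, hne b r j h, hne c r j h]
  have h1 : ∀ (b : ZMod n) (r : {j : Fin d // j ≠ i} → ZMod n),
      (slot n d M i *ᵥ w) (e.symm (b, r)) = (M *ᵥ fun c => w (e.symm (c, r))) b := by
    intro b r
    rw [slot_mulVec]
    show _ = ∑ c, M b c * w (e.symm (c, r))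
    rw [hsame b r]
    exact Finset.sum_congr rfl fun c _ => by rw [hupd b c r]
  have hsq : ∀ u : ZMod n → ℂ,
      ∑ b, ‖u b‖ ^ 2 = ‖(EuclideanSpace.equiv (ZMod n) ℂ).symm u‖ ^ 2 := fun u => by
    rw [EuclideanSpace.norm_eq, Real.sq_sqrt (Finset.sum_nonneg fun b _ => sq_nonneg _)]
    rfl
  have hsq2 : ∀ u : (Fin d → ZMod n) → ℂ,
      ∑ x, ‖u x‖ ^ 2 = ‖(EuclideanSpace.equiv (Fin d → ZMod n) ℂ).symm u‖ ^ 2 := fun u => by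
    rw [EuclideanSpace.norm_eq, Real.sq_sqrt (Finset.sum_nonneg fun b _ => sq_nonneg _)]
    rfl
  have hnn : (0:ℝ) ≤ ‖M‖ * ‖w‖ := mul_nonneg (norm_nonneg _) (norm_nonneg _)
  have main : ∑ x, ‖(slot n d M i *ᵥ w) x‖ ^ 2 ≤ (‖M‖ * ‖w‖) ^ 2 := by
    calc ∑ x, ‖(slot n d M i *ᵥ w) x‖ ^ 2
        = ∑ p : ZMod n × ({j : Fin d // j ≠ i} → ZMod n),
            ‖(slot n d M i *ᵥ w) (e.symm p)‖ ^ 2 :=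
          (Equiv.sum_comp e.symm fun x => ‖(slot n d M i *ᵥ w) x‖ ^ 2).symm
      _ = ∑ r, ∑ b, ‖(slot n d M i *ᵥ w) (e.symm (b, r))‖ ^ 2 :=
          Fintype.sum_prod_type_right
            (f := fun p : ZMod n × ({j : Fin d // j ≠ i} → ZMod n) =>
              ‖(slot n d M i *ᵥ w) (e.symm p)‖ ^ 2)
      _ = ∑ r, ∑ b, ‖(M *ᵥ fun c => w (e.symm (c, r))) b‖ ^ 2 := by
          refine Finset.sum_congr rfl fun r _ => Finset.sum_congr rfl fun b _ => ?_
          rw [h1 b r]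
      _ ≤ ∑ r, (‖M‖ * ‖(EuclideanSpace.equiv (ZMod n) ℂ).symm
              (fun c => w (e.symm (c, r)))‖) ^ 2 := by
          refine Finset.sum_le_sum fun r _ => ?_
          rw [hsq (M *ᵥ fun c => w (e.symm (c, r)))]
          exact pow_le_pow_left₀ (norm_nonneg _)
            (Matrix.l2_opNorm_mulVec M ((EuclideanSpace.equiv (ZMod n) ℂ).symm
              (fun c => w (e.symm (c, r))))) 2
      _ = ‖M‖ ^ 2 * ∑ r, ∑ b, ‖w (e.symm (b, r))‖ ^ 2 := by
          rw [Finset.mul_sum]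
          refine Finset.sum_congr rfl fun r _ => ?_
          rw [mul_pow, ← hsq (fun c => w (e.symm (c, r)))]
      _ = ‖M‖ ^ 2 * ∑ x, ‖w x‖ ^ 2 := by
          rw [← Fintype.sum_prod_type_right
            (f := fun p : ZMod n × ({j : Fin d // j ≠ i} → ZMod n) => ‖w (e.symm p)‖ ^ 2),
            Equiv.sum_comp e.symm fun x => ‖w x‖ ^ 2]
      _ = (‖M‖ * ‖w‖) ^ 2 := by
          rw [hsq2 w, mul_pow]
          rfl
  calc ‖(EuclideanSpace.equiv (Fin d → ZMod n) ℂ).symm (slot n d M i *ᵥ w)‖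
      = Real.sqrt (∑ x, ‖(slot n d M i *ᵥ w) x‖ ^ 2) := EuclideanSpace.norm_eq _
    _ ≤ Real.sqrt ((‖M‖ * ‖w‖) ^ 2) := Real.sqrt_le_sqrt main
    _ = ‖M‖ * ‖w‖ := Real.sqrt_sq hnn

end Aux

theorem stmt18 (n : ℕ) [NeZero n] [Fact (Nat.Prime n)] (hodd : Odd n)
    (c : ZMod n) (hc : c ≠ 0) (d : ℕ) (hd : 0 < d) :
    opNormM ((1 / (4 * d : ℂ)) • ∑ i : Fin d,
        (slot n d (Smat n) i + (slot n d (Smat n) i)ᴴ +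
          slot n d (Rmat n ^ c.val) i + (slot n d (Rmat n ^ c.val) i)ᴴ)) =
      opNormM ((1 / 4 : ℂ) •
        (Smat n + (Smat n)ᴴ + Rmat n ^ c.val + (Rmat n ^ c.val)ᴴ)) := by
  classical
  set M₀ : Matrix (ZMod n) (ZMod n) ℂ :=
    Smat n + (Smat n)ᴴ + Rmat n ^ c.val + (Rmat n ^ c.val)ᴴ with hM₀
  have hherm : M₀.IsHermitian := by
    unfold Matrix.IsHermitian
    rw [hM₀]
    simp only [conjTranspose_add, conjTranspose_conjTranspose]
    abel
  have hslot : ∀ i : Fin d, slot n d (Smat n) i + (slot n d (Smat n) i)ᴴ +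
      slot n d (Rmat n ^ c.val) i + (slot n d (Rmat n ^ c.val) i)ᴴ = slot n d M₀ i := fun i => by
    rw [slot_conjTranspose, slot_conjTranspose, hM₀, slot_add, slot_add, slot_add]
  rw [opNormM_eq, opNormM_eq]
  simp only [hslot]
  have hdR : (0:ℝ) < (d:ℝ) := by exact_mod_cast hd
  have hT : ‖∑ i : Fin d, slot n d M₀ i‖ = d * ‖M₀‖ := by
    refine le_antisymm ?_ ?_
    · calc ‖∑ i : Fin d, slot n d M₀ i‖ ≤ ∑ i : Fin d, ‖slot n d M₀ i‖ :=
            norm_sum_le _ _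
        _ ≤ ∑ _i : Fin d, ‖M₀‖ := Finset.sum_le_sum fun i _ => norm_slot_le _ _
        _ = d * ‖M₀‖ := by
            rw [Finset.sum_const, Finset.card_univ, Fintype.card_fin, nsmul_eq_mul]
    · obtain ⟨lam, v, hv0, hv, hle⟩ := exists_eig hherm
      set V : (Fin d → ZMod n) → ℂ := fun x => ∏ j, v (x j) with hV
      have hTV : (∑ i : Fin d, slot n d M₀ i) *ᵥ V = ((d : ℂ) * (lam : ℂ)) • V := by
        rw [_root_.sum_mulVec]
        have : ∀ i : Fin d, slot n d M₀ i *ᵥ V = (lam : ℂ) • V := fun i =>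
          slot_mulVec_prodvec M₀ i v (lam : ℂ) hv
        rw [Finset.sum_congr rfl fun i _ => this i, Finset.sum_const, Finset.card_univ,
          Fintype.card_fin]
        rw [← Nat.cast_smul_eq_nsmul ℂ, smul_smul]
      have hV0 : V ≠ 0 := by
        obtain ⟨a, ha⟩ : ∃ a, v a ≠ 0 := by
          by_contra h
          push_neg at h
          exact hv0 (funext h)
        intro h
        have := congrFun h (fun _ => a)
        simp only [hV, Pi.zero_apply] at this
        rw [Finset.prod_const] at this
        exact pow_ne_zero _ ha this
      set VE : EuclideanSpace ℂ (Fin d → ZMod n) :=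
        (EuclideanSpace.equiv (Fin d → ZMod n) ℂ).symm V with hVE
      have hVE0 : ‖VE‖ ≠ 0 := by
        rw [norm_ne_zero_iff]
        intro h
        exact hV0 (congrArg (EuclideanSpace.equiv (Fin d → ZMod n) ℂ) h)
      have hmv := Matrix.l2_opNorm_mulVec (∑ i : Fin d, slot n d M₀ i) VE
      have heq : (EuclideanSpace.equiv (Fin d → ZMod n) ℂ).symm
          ((∑ i : Fin d, slot n d M₀ i) *ᵥ VE)
          = ((d : ℂ) * (lam : ℂ)) • VE := by
        show (EuclideanSpace.equiv (Fin d → ZMod n) ℂ).symm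
          ((∑ i : Fin d, slot n d M₀ i) *ᵥ V) = _
        rw [hTV]
        rfl
      rw [heq, norm_smul] at hmv
      have hnormc : ‖(d : ℂ) * (lam : ℂ)‖ = d * |lam| := by
        rw [norm_mul, Complex.norm_natCast, Complex.norm_real, Real.norm_eq_abs]
      rw [hnormc] at hmv
      have hfin : (d:ℝ) * |lam| ≤ ‖∑ i : Fin d, slot n d M₀ i‖ :=
        le_of_mul_le_mul_right (by simpa [mul_comm] using hmv)
          (lt_of_le_of_ne (norm_nonneg VE) (Ne.symm hVE0))
      calc (d:ℝ) * ‖M₀‖ ≤ (d:ℝ) * |lam| :=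
            mul_le_mul_of_nonneg_left hle (le_of_lt hdR)
        _ ≤ _ := hfin
  rw [norm_smul, norm_smul, hT]
  have h1 : ‖(1 / (4 * (d:ℂ)))‖ = 1 / (4 * d) := by
    rw [norm_div, norm_one, norm_mul, RCLike.norm_ofNat, Complex.norm_natCast]
  have h2 : ‖(1 / 4 : ℂ)‖ = 1 / 4 := by
    rw [norm_div, norm_one, RCLike.norm_ofNat]
  rw [h1, h2]
  field_simp
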